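/- Let G and G* be finite groups of coprime order. If G × G* admits a ramification structure of size (r, s), then G admits a ramification structure of size (r₁, r₂) for some r₁ ≤ r, r₂ ≤ s (assuming G is not cyclic, in particular the projections after deleting identity entries are nonempty and form a ramification structure). Moreover, if G has odd order and admits such a structure, then G admits a ramification structure of size exactly (r, s). -/

import Mathlib

/-- A spherical system of generators: a tuple (list) of nontrivial elements
generating `G` whose product is `1`. -/
def IsSpherical {G : Type*} [Group G] (T : List G) : Prop :=
  (∀ g ∈ T, g ≠ 1) ∧ Subgroup.closure {g : G | g ∈ T} = ⊤ ∧ T.prod = 1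

/-- `Σ(T)`: the union of all conjugates of the cyclic subgroups generated by
the entries of `T`. -/
def SigmaSet {G : Type*} [Group G] (T : List G) : Set G :=
  {x : G | ∃ t ∈ T, ∃ c : G, ∃ k : ℤ, x = c * t ^ k * c⁻¹}

/-- An (unmixed) ramification structure: a pair of spherical systems of
generators which are disjoint, i.e. `Σ(T₁) ∩ Σ(T₂) = {1}`. -/
def IsRamificationStructure {G : Type*} [Group G] (T₁ T₂ : List G) : Prop :=
  IsSpherical T₁ ∧ IsSpherical T₂ ∧ SigmaSet T₁ ∩ SigmaSet T₂ = {1}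

section Helpers

variable {G : Type*} [Group G]

lemma filter_ne_one_prod [DecidableEq G] (l : List G) :
    (l.filter (· ≠ 1)).prod = l.prod := by
  induction l with
  | nil => simp
  | cons a t ih =>
    by_cases h : a = 1
    · subst h; simpa using ih
    · rw [List.filter_cons_of_pos (by simpa using h), List.prod_cons, List.prod_cons, ih]

lemma closure_filter_ne_one [DecidableEq G] (l : List G) :
    Subgroup.closure {g : G | g ∈ l.filter (· ≠ 1)} = Subgroup.closure {g : G | g ∈ l} := by
  apply le_antisymm
  · exact Subgroup.closure_mono (fun g hg => (List.mem_filter.mp hg).1)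
  · rw [Subgroup.closure_le]
    intro g hg
    by_cases h : g = 1
    · subst h
      exact Subgroup.one_mem _
    · exact Subgroup.subset_closure (List.mem_filter.mpr ⟨hg, by simpa using h⟩)

lemma sigma_subset_of_pow {T' T : List G}
    (h : ∀ t' ∈ T', ∃ t ∈ T, ∃ m : ℤ, t' = t ^ m) :
    SigmaSet T' ⊆ SigmaSet T := by
  rintro x ⟨t', ht', c, k, rfl⟩
  obtain ⟨t, ht, m, rfl⟩ := h t' ht'
  exact ⟨t, ht, c, m * k, by rw [zpow_mul]⟩

lemma one_mem_sigma {T : List G} (h : T ≠ []) : (1 : G) ∈ SigmaSet T := by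
  obtain ⟨t, ht⟩ := List.exists_mem_of_ne_nil T h
  exact ⟨t, ht, 1, 0, by simp⟩

lemma mem_sigma_lift {G G' : Type*} [Group G] [Group G'] [Finite G] [Finite G']
    (hcop : Nat.Coprime (Nat.card G) (Nat.card G')) (hcard : 1 < Nat.card G)
    (A : List (G × G')) {x : G} (hx : x ∈ SigmaSet (A.map Prod.fst)) :
    ((x, 1) : G × G') ∈ SigmaSet A := by
  obtain ⟨t, ht, c, k, rfl⟩ := hx
  obtain ⟨a, ha, rfl⟩ := List.mem_map.mp ht
  obtain ⟨d, -, hd⟩ := Nat.exists_mul_mod_eq_one_of_coprime hcop.symm hcard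
  have h1 : a.1 ^ (Nat.card G' * d) = a.1 := by
    conv_lhs => rw [← pow_mod_natCard]
    rw [hd, pow_one]
  have h2 : a.2 ^ (Nat.card G' * d) = 1 := by
    conv_lhs => rw [pow_mul, ← pow_mod_natCard a.2 (Nat.card G')]
    rw [Nat.mod_self, pow_zero, one_pow]
  refine ⟨a, ha, (c, 1), ((Nat.card G' * d : ℕ) : ℤ) * k, ?_⟩
  have hpow : a ^ (((Nat.card G' * d : ℕ) : ℤ) * k) = ((a.1 ^ k : G), (1 : G')) := by
    rw [zpow_mul, zpow_natCast]
    ext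
    · simp [h1]
    · simp [h2]
  rw [hpow]
  ext <;> simp

lemma pad_spherical [Finite G] (hodd : Odd (Nat.card G)) (T : List G)
    (hT : IsSpherical T) (hne : T ≠ []) (k : ℕ) :
    ∃ T' : List G, T'.length = T.length + k ∧ IsSpherical T' ∧
      (∀ t' ∈ T', ∃ t ∈ T, ∃ m : ℤ, t' = t ^ m) ∧ T' ≠ [] := by
  obtain ⟨z, L, rfl⟩ : ∃ z L, T = z :: L := by
    cases T with
    | nil => exact absurd rfl hne
    | cons z L => exact ⟨z, L, rfl⟩
  obtain ⟨hT1, hT2, hT3⟩ := hT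
  have hz : z ≠ 1 := hT1 z (List.mem_cons_self)
  have hzi : z⁻¹ ≠ 1 := by simpa using hz
  have hz2 : z * z ≠ 1 := by
    intro h
    apply hz
    have hdvd2 : orderOf z ∣ 2 := orderOf_dvd_of_pow_eq_one (by rw [pow_two]; exact h)
    have hdvdc : orderOf z ∣ Nat.card G := orderOf_dvd_natCard z
    have hcop2 : Nat.Coprime 2 (Nat.card G) := by
      rwa [Nat.coprime_two_left]
    have : orderOf z ∣ Nat.gcd 2 (Nat.card G) := Nat.dvd_gcd hdvd2 hdvdc
    rw [Nat.Coprime] at hcop2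
    rw [hcop2, Nat.dvd_one] at this
    exact orderOf_eq_one_iff.mp this
  -- the padding tail consisting of pairs (z, z⁻¹)
  set P : List G := List.replicate (k / 2) z ++ List.replicate (k / 2) z⁻¹ with hP
  have hPlen : P.length = k / 2 + k / 2 := by simp [hP]
  have hPprod : P.prod = 1 := by
    simp [hP, List.prod_replicate, inv_pow]
  have hPmem : ∀ g ∈ P, g = z ∨ g = z⁻¹ := by
    intro g hg
    rcases List.mem_append.mp hg with h | h
    · exact Or.inl (List.eq_of_mem_replicate h)
    · exact Or.inr (List.eq_of_mem_replicate h)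
  rcases Nat.even_or_odd k with hk | hk
  · -- even case : T' = (z :: L) ++ P
    refine ⟨(z :: L) ++ P, ?_, ⟨?_, ?_, ?_⟩, ?_, by simp⟩
    · have hk2 : k % 2 = 0 := Nat.even_iff.mp hk
      simp [hPlen]
      omega
    · intro g hg
      rcases List.mem_append.mp hg with h | h
      · exact hT1 g h
      · rcases hPmem g h with h1 | h1
        · rw [h1]; exact hz
        · rw [h1]; exact hzi
    · rw [eq_top_iff, ← hT2, Subgroup.closure_le]
      intro g hg
      exact Subgroup.subset_closure (List.mem_append.mpr (Or.inl hg))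
    · rw [List.prod_append, hT3, hPprod, one_mul]
    · intro t' ht'
      rcases List.mem_append.mp ht' with h | h
      · exact ⟨t', h, 1, (zpow_one t').symm⟩
      · rcases hPmem t' h with h1 | h1
        · exact ⟨z, List.mem_cons_self, 1, by rw [h1, zpow_one]⟩
        · exact ⟨z, List.mem_cons_self, -1, by rw [h1, zpow_neg_one]⟩
  · -- odd case : T' = (z*z) :: z⁻¹ :: L ++ P
    refine ⟨(z * z) :: z⁻¹ :: (L ++ P), ?_, ⟨?_, ?_, ?_⟩, ?_, by simp⟩
    · have hk2 : k % 2 = 1 := Nat.odd_iff.mp hk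
      simp [hPlen]
      omega
    · intro g hg
      rw [List.mem_cons, List.mem_cons] at hg
      rcases hg with rfl | rfl | hg
      · exact hz2
      · exact hzi
      rcases List.mem_append.mp hg with h | h
      · exact hT1 g (List.mem_cons_of_mem z h)
      · rcases hPmem g h with h1 | h1
        · rw [h1]; exact hz
        · rw [h1]; exact hzi
    · rw [eq_top_iff, ← hT2, Subgroup.closure_le]
      intro g hg
      rw [Set.mem_setOf_eq, List.mem_cons] at hg
      rcases hg with h1 | hg
      · -- g = z
        rw [h1]
        have hmem1 : (z * z) ∈ Subgroup.closure {g : G | g ∈ (z*z) :: z⁻¹ :: (L ++ P)} :=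
          Subgroup.subset_closure (by simp)
        have hmem2 : (z⁻¹ : G) ∈ Subgroup.closure {g : G | g ∈ (z*z) :: z⁻¹ :: (L ++ P)} :=
          Subgroup.subset_closure (by simp)
        have hm := Subgroup.mul_mem _ hmem1 hmem2
        simpa [mul_assoc] using hm
      · exact Subgroup.subset_closure
          (List.mem_cons_of_mem _ (List.mem_cons_of_mem _ (List.mem_append.mpr (Or.inl hg))))
    · have : ((z * z) :: z⁻¹ :: (L ++ P)).prod = z * L.prod * P.prod := by
        simp [List.prod_cons, List.prod_append, mul_assoc]
      rw [this, hPprod, mul_one, ← List.prod_cons, hT3]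
    · intro t' ht'
      rw [List.mem_cons, List.mem_cons] at ht'
      rcases ht' with rfl | rfl | ht'
      · exact ⟨z, List.mem_cons_self, 2, by rw [zpow_two]⟩
      · exact ⟨z, List.mem_cons_self, -1, (zpow_neg_one z).symm⟩
      rcases List.mem_append.mp ht' with h | h
      · exact ⟨t', List.mem_cons_of_mem z h, 1, (zpow_one t').symm⟩
      · rcases hPmem t' h with h1 | h1
        · exact ⟨z, List.mem_cons_self, 1, by rw [h1, zpow_one]⟩
        · exact ⟨z, List.mem_cons_self, -1, by rw [h1, zpow_neg_one]⟩

end Helpers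

theorem stmt_19 {G G' : Type*} [Group G] [Group G'] [Finite G] [Finite G']
    [DecidableEq G]
    (hcop : Nat.Coprime (Nat.card G) (Nat.card G'))
    (hnc : ¬ IsCyclic G)
    (r s : ℕ) (A₁ A₂ : List (G × G')) (hl₁ : A₁.length = r) (hl₂ : A₂.length = s)
    (hA : IsRamificationStructure A₁ A₂) :
    (IsRamificationStructure ((A₁.map Prod.fst).filter (· ≠ 1))
        ((A₂.map Prod.fst).filter (· ≠ 1)) ∧
      ((A₁.map Prod.fst).filter (· ≠ 1)).length ≤ r ∧
      ((A₂.map Prod.fst).filter (· ≠ 1)).length ≤ s) ∧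
    (Odd (Nat.card G) →
      ∃ T₁ T₂ : List G, T₁.length = r ∧ T₂.length = s ∧
        IsRamificationStructure T₁ T₂) := by
  have hnt : Nontrivial G := by
    by_contra h
    rw [not_nontrivial_iff_subsingleton] at h
    exact hnc isCyclic_of_subsingleton
  have hcard : 1 < Nat.card G := Finite.one_lt_card_iff_nontrivial.mpr hnt
  obtain ⟨hS₁, hS₂, hI⟩ := hA
  set T₁ : List G := (A₁.map Prod.fst).filter (· ≠ 1) with hT₁def
  set T₂ : List G := (A₂.map Prod.fst).filter (· ≠ 1) with hT₂def
  have hfstsurj : Function.Surjective (MonoidHom.fst G G') := fun g => ⟨(g, 1), rfl⟩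
  -- sphericity of the filtered projections
  have hsph : ∀ (A : List (G × G')), IsSpherical A →
      IsSpherical ((A.map Prod.fst).filter (· ≠ 1)) := by
    rintro A ⟨h1, h2, h3⟩
    refine ⟨fun g hg => by simpa using (List.mem_filter.mp hg).2, ?_, ?_⟩
    · rw [closure_filter_ne_one]
      have himg : {g : G | g ∈ A.map Prod.fst} = (MonoidHom.fst G G') '' {a | a ∈ A} := by
        ext g
        simp [List.mem_map]
      rw [himg, ← MonoidHom.map_closure, h2]
      exact Subgroup.map_top_of_surjective _ hfstsurj
    · rw [filter_ne_one_prod]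
      have hph := List.prod_hom A (MonoidHom.fst G G')
      have : (List.map Prod.fst A).prod = (MonoidHom.fst G G') A.prod := hph
      rw [this, h3, map_one]
  have hsph₁ : IsSpherical T₁ := hsph A₁ hS₁
  have hsph₂ : IsSpherical T₂ := hsph A₂ hS₂
  -- nonemptiness
  have hne : ∀ (T : List G), IsSpherical T → T ≠ [] := by
    rintro T ⟨-, h2, -⟩ rfl
    obtain ⟨g, hg⟩ := exists_ne (1 : G)
    apply hg
    have : g ∈ Subgroup.closure {x : G | x ∈ ([] : List G)} := by rw [h2]; trivial
    rw [show {x : G | x ∈ ([] : List G)} = ∅ by simp, Subgroup.closure_empty] at this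
    exact this
  have hne₁ : T₁ ≠ [] := hne T₁ hsph₁
  have hne₂ : T₂ ≠ [] := hne T₂ hsph₂
  -- disjointness
  have hsub₁ : SigmaSet T₁ ⊆ SigmaSet (A₁.map Prod.fst) :=
    sigma_subset_of_pow fun t' ht' => ⟨t', (List.mem_filter.mp ht').1, 1, (zpow_one t').symm⟩
  have hsub₂ : SigmaSet T₂ ⊆ SigmaSet (A₂.map Prod.fst) :=
    sigma_subset_of_pow fun t' ht' => ⟨t', (List.mem_filter.mp ht').1, 1, (zpow_one t').symm⟩
  have hdisj : SigmaSet T₁ ∩ SigmaSet T₂ = {1} := by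
    apply Set.eq_singleton_iff_unique_mem.mpr
    constructor
    · exact ⟨one_mem_sigma hne₁, one_mem_sigma hne₂⟩
    · rintro x ⟨hx₁, hx₂⟩
      have hm₁ : ((x, 1) : G × G') ∈ SigmaSet A₁ :=
        mem_sigma_lift hcop hcard A₁ (hsub₁ hx₁)
      have hm₂ : ((x, 1) : G × G') ∈ SigmaSet A₂ :=
        mem_sigma_lift hcop hcard A₂ (hsub₂ hx₂)
      have : ((x, 1) : G × G') ∈ ({1} : Set (G × G')) := hI ▸ ⟨hm₁, hm₂⟩
      rw [Set.mem_singleton_iff, Prod.ext_iff] at this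
      exact this.1
  have hram : IsRamificationStructure T₁ T₂ := ⟨hsph₁, hsph₂, hdisj⟩
  have hlen₁ : T₁.length ≤ r := by
    calc T₁.length ≤ (A₁.map Prod.fst).length := List.length_filter_le _ _
    _ = r := by rw [List.length_map, hl₁]
  have hlen₂ : T₂.length ≤ s := by
    calc T₂.length ≤ (A₂.map Prod.fst).length := List.length_filter_le _ _
    _ = s := by rw [List.length_map, hl₂]
  refine ⟨⟨hram, hlen₁, hlen₂⟩, ?_⟩
  -- odd order case
  intro hodd
  obtain ⟨T₁', hlen₁', hsph₁', hpow₁', hne₁'⟩ :=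
    pad_spherical hodd T₁ hsph₁ hne₁ (r - T₁.length)
  obtain ⟨T₂', hlen₂', hsph₂', hpow₂', hne₂'⟩ :=
    pad_spherical hodd T₂ hsph₂ hne₂ (s - T₂.length)
  refine ⟨T₁', T₂', ?_, ?_, hsph₁', hsph₂', ?_⟩
  · rw [hlen₁']; omega
  · rw [hlen₂']; omega
  · apply Set.eq_singleton_iff_unique_mem.mpr
    constructor
    · exact ⟨one_mem_sigma hne₁', one_mem_sigma hne₂'⟩
    · rintro x ⟨hx₁, hx₂⟩
      have : x ∈ SigmaSet T₁ ∩ SigmaSet T₂ :=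
        ⟨sigma_subset_of_pow hpow₁' hx₁, sigma_subset_of_pow hpow₂' hx₂⟩
      rw [hdisj] at this
      exact this
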